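/- Let T > 0 and let s > 0 satisfy (2/(3π)) s^{3/2} > 27. Then ∫_{(2/(3π)) s^{3/2}}^{∞} exp( T^{1/3} ( s − ((3π/2) z)^{2/3} ) ) dz ≤ √(2/π) s^{3/4} + 4/(π T). -/

import Mathlib

open Real MeasureTheory

lemma key_wv (v w : ℝ) (hv : 2 ≤ v) (hvw : v ≤ w)
    (hb : v^3 + (3/2) * Real.sqrt (2*π) * (v * Real.sqrt v) ≤ w^3) :
    w^3 - v^3 ≤ (w^2 - v^2)^3 := by
  have hv0 : (0:ℝ) < v := by linarith
  have hw0 : (0:ℝ) < w := lt_of_lt_of_le hv0 hvw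
  obtain ⟨u, hu⟩ : ∃ u, u = w ^ 2 - v ^ 2 := ⟨_, rfl⟩
  rw [← hu]
  have hu0 : 0 ≤ u := by nlinarith
  have hmain : w^3 - v^3 ≤ 3/2 * w * u := by
    nlinarith [mul_nonneg (sq_nonneg (w - v)) (by linarith : (0:ℝ) ≤ w + 2*v)]
  have hq : 0 ≤ Real.sqrt v := Real.sqrt_nonneg v
  have hwu : Real.sqrt (2*π) * (v * Real.sqrt v) ≤ w * u := by nlinarith
  suffices hsuff : 3/2 * w ≤ u^2 by nlinarith [mul_le_mul_of_nonneg_left hsuff hu0]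
  rcases le_or_gt (w^2) (2*v^2) with hcase | hcase
  · have hsq2 : Real.sqrt (2*π) = Real.sqrt 2 * Real.sqrt π := Real.sqrt_mul (by norm_num) π
    have hs2 : Real.sqrt 2 ^ 2 = 2 := Real.sq_sqrt (by norm_num)
    have hs2nn : (0:ℝ) ≤ Real.sqrt 2 := Real.sqrt_nonneg 2
    have hspi : Real.sqrt π ^ 2 = π := Real.sq_sqrt Real.pi_pos.le
    have hspinn : (0:ℝ) ≤ Real.sqrt π := Real.sqrt_nonneg π
    have hqv : Real.sqrt v ^ 2 = v := Real.sq_sqrt hv0.le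
    have hw_le : w ≤ Real.sqrt 2 * v := by
      have h2 : w^2 ≤ (Real.sqrt 2 * v)^2 := by nlinarith
      exact (pow_le_pow_iff_left₀ hw0.le (mul_nonneg hs2nn hv0.le) (by norm_num)).mp h2
    have hu_ge : Real.sqrt π * Real.sqrt v ≤ u := by
      have h1 : Real.sqrt 2 * Real.sqrt π * (v * Real.sqrt v) ≤ (Real.sqrt 2 * v) * u := by
        rw [hsq2] at hwu
        exact le_trans hwu (mul_le_mul_of_nonneg_right hw_le hu0)
      have hs2pos : (0:ℝ) < Real.sqrt 2 := Real.sqrt_pos.mpr (by norm_num)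
      exact (mul_le_mul_iff_of_pos_left (mul_pos hs2pos hv0)).mp (by nlinarith)
    have hpi3 : (3:ℝ) < π := Real.pi_gt_three
    nlinarith [mul_le_mul hu_ge hu_ge (mul_nonneg hspinn hq) hu0]
  · have hw2 : 2 ≤ w := le_trans hv hvw
    nlinarith [sq_nonneg (w - 2), sq_nonneg v]

theorem tail_integral_bound (T s : ℝ) (hT : 0 < T) (hs : 0 < s)
    (hbig : 27 < (2 / (3 * π)) * s ^ ((3 : ℝ) / 2)) :
    (∫ z in Set.Ici ((2 / (3 * π)) * s ^ ((3 : ℝ) / 2)),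
        Real.exp (T ^ ((1 : ℝ) / 3) * (s - ((3 * π / 2) * z) ^ ((2 : ℝ) / 3)))) ≤
      Real.sqrt (2 / π) * s ^ ((3 : ℝ) / 4) + 4 / (π * T) := by
  have hπ : (0:ℝ) < π := pi_pos
  have hpi3 : (3:ℝ) < π := pi_gt_three
  obtain ⟨a, ha⟩ : ∃ a : ℝ, a = 2 / (3 * π) * s ^ ((3:ℝ)/2) := ⟨_, rfl⟩
  rw [← ha] at hbig ⊢
  have ha27 : (27:ℝ) < a := hbig
  have ha0 : (0:ℝ) < a := by linarith
  have hsa : 3 * π / 2 * a = s ^ ((3:ℝ)/2) := by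
    rw [ha]; field_simp
  obtain ⟨b, hbdef⟩ : ∃ b : ℝ, b = a + Real.sqrt (2/π) * s ^ ((3:ℝ)/4) := ⟨_, rfl⟩
  have hba : a ≤ b := by
    have : 0 ≤ Real.sqrt (2/π) * s ^ ((3:ℝ)/4) := by positivity
    linarith [hbdef]
  obtain ⟨c, hcdef⟩ : ∃ c : ℝ, c = T ^ ((1:ℝ)/3) * (3 * π / 2) ^ ((1:ℝ)/3) := ⟨_, rfl⟩
  have hc0 : 0 < c := by
    rw [hcdef]
    exact mul_pos (Real.rpow_pos_of_pos hT _) (Real.rpow_pos_of_pos (by positivity) _)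
  -- s ≥ 4
  have hX : (121:ℝ) < s ^ ((3:ℝ)/2) := by nlinarith
  have hs4 : (4:ℝ) ≤ s := by
    by_contra h
    push_neg at h
    have h1 : s ^ ((3:ℝ)/2) < (4:ℝ) ^ ((3:ℝ)/2) := Real.rpow_lt_rpow hs.le h (by norm_num)
    have h2 : (4:ℝ) ^ ((3:ℝ)/2) = 8 := by
      rw [show (4:ℝ) = 2 ^ (2:ℕ) by norm_num, ← Real.rpow_natCast 2 2,
        ← Real.rpow_mul (by norm_num : (0:ℝ) ≤ 2),
        show ((2:ℕ):ℝ) * (3/2) = ((3:ℕ):ℝ) by norm_num, Real.rpow_natCast]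
      norm_num
    linarith
  -- sqrt helpers
  have h32 : ∀ t : ℝ, 0 ≤ t → t ^ ((3:ℝ)/2) = Real.sqrt t ^ 3 := by
    intro t ht
    rw [Real.sqrt_eq_rpow, ← Real.rpow_natCast (t ^ ((1:ℝ)/2)) 3, ← Real.rpow_mul ht]
    norm_num
  have h34 : s ^ ((3:ℝ)/4) = Real.sqrt s * Real.sqrt (Real.sqrt s) := by
    have h1 : s ^ ((3:ℝ)/4) = Real.sqrt (s ^ ((3:ℝ)/2)) := by
      rw [Real.sqrt_eq_rpow, ← Real.rpow_mul hs.le]; norm_num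
    rw [h1, h32 s hs.le, show Real.sqrt s ^ 3 = Real.sqrt s ^ 2 * Real.sqrt s by ring,
      Real.sqrt_mul (sq_nonneg _), Real.sqrt_sq (Real.sqrt_nonneg s)]
  -- pointwise bound
  have hkey : ∀ z ∈ Set.Ici a, Real.exp (T ^ ((1:ℝ)/3) * (s - (3 * π / 2 * z) ^ ((2:ℝ)/3))) ≤
      (Set.Icc a b).indicator (fun _ => (1:ℝ)) z + Real.exp (-c * (z - a) ^ ((1:ℝ)/3)) := by
    intro z hz
    have hz' : a ≤ z := hz
    have hz0 : (0:ℝ) ≤ z := le_trans ha0.le hz'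
    have hx0 : (0:ℝ) ≤ 3 * π / 2 * z := by positivity
    have hxs : s ≤ (3 * π / 2 * z) ^ ((2:ℝ)/3) := by
      have h1 : s ^ ((3:ℝ)/2) ≤ 3 * π / 2 * z := by
        rw [← hsa]; exact mul_le_mul_of_nonneg_left hz' (by positivity)
      calc s = (s ^ ((3:ℝ)/2)) ^ ((2:ℝ)/3) := by
              rw [← Real.rpow_mul hs.le]; norm_num
        _ ≤ _ := Real.rpow_le_rpow (by positivity) h1 (by norm_num)
    by_cases hzb : z ≤ b
    · rw [Set.indicator_of_mem (Set.mem_Icc.mpr ⟨hz', hzb⟩)]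
      have h1 : Real.exp (T ^ ((1:ℝ)/3) * (s - (3 * π / 2 * z) ^ ((2:ℝ)/3))) ≤ 1 := by
        rw [Real.exp_le_one_iff]
        exact mul_nonpos_of_nonneg_of_nonpos (Real.rpow_nonneg hT.le _) (by linarith)
      have h2 : (0:ℝ) < Real.exp (-c * (z-a) ^ ((1:ℝ)/3)) := Real.exp_pos _
      linarith
    · push_neg at hzb
      rw [Set.indicator_of_notMem (by simp only [Set.mem_Icc, not_and, not_le]; intro _; exact hzb),
        zero_add, Real.exp_le_exp]
      set x := (3 * π / 2 * z) ^ ((2:ℝ)/3) with hxdef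
      have hxnn : (0:ℝ) ≤ x := Real.rpow_nonneg hx0 _
      have hx32 : x ^ ((3:ℝ)/2) = 3 * π / 2 * z := by
        rw [hxdef, ← Real.rpow_mul hx0]; norm_num
      have hD : 3 * π / 2 * (z - a) = x ^ ((3:ℝ)/2) - s ^ ((3:ℝ)/2) := by
        rw [hx32, ← hsa]; ring
      have hD0 : (0:ℝ) ≤ 3 * π / 2 * (z - a) := by
        have hza : (0:ℝ) ≤ z - a := by linarith
        positivity
      -- key inequality via key_wv
      have hv2 : (2:ℝ) ≤ Real.sqrt s := by
        have : Real.sqrt 4 ≤ Real.sqrt s := Real.sqrt_le_sqrt hs4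
        rwa [show (4:ℝ) = 2^2 by norm_num, Real.sqrt_sq (by norm_num : (0:ℝ) ≤ 2)] at this
      have hvw : Real.sqrt s ≤ Real.sqrt x := Real.sqrt_le_sqrt hxs
      have hpihalf : π * Real.sqrt (2/π) = Real.sqrt (2*π) := by
        rw [show (2:ℝ)*π = π^2 * (2/π) by field_simp, Real.sqrt_mul (sq_nonneg π),
          Real.sqrt_sq hπ.le]
      have hbw : Real.sqrt s ^ 3 + (3/2) * Real.sqrt (2*π) * (Real.sqrt s * Real.sqrt (Real.sqrt s))
          ≤ Real.sqrt x ^ 3 := by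
        have h1 : 3 * π / 2 * b ≤ 3 * π / 2 * z := mul_le_mul_of_nonneg_left hzb.le (by positivity)
        rw [← hx32, h32 x hxnn] at h1
        have h2 : 3 * π / 2 * b = s ^ ((3:ℝ)/2) + (3/2) * Real.sqrt (2*π) * s ^ ((3:ℝ)/4) := by
          rw [hbdef, mul_add, hsa, ← hpihalf]; ring
        rw [h2, h32 s hs.le, h34] at h1
        linarith
      have hkw := key_wv (Real.sqrt s) (Real.sqrt x) hv2 hvw hbw
      rw [Real.sq_sqrt hxnn, Real.sq_sqrt hs.le, ← h32 s hs.le, ← h32 x hxnn] at hkw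
      -- so x^{3/2} - s^{3/2} ≤ (x - s)^3
      have hxs' : (0:ℝ) ≤ x - s := by linarith
      have hcube : (3 * π / 2 * (z - a)) ^ ((1:ℝ)/3) ≤ x - s := by
        calc (3 * π / 2 * (z - a)) ^ ((1:ℝ)/3) ≤ ((x - s)^3) ^ ((1:ℝ)/3) := by
              apply Real.rpow_le_rpow hD0 _ (by norm_num)
              rw [hD]; linarith
          _ = x - s := by
              rw [← Real.rpow_natCast (x - s) 3, ← Real.rpow_mul hxs']
              norm_num
      have hcz : c * (z - a) ^ ((1:ℝ)/3) = T ^ ((1:ℝ)/3) * (3 * π / 2 * (z - a)) ^ ((1:ℝ)/3) := by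
        rw [Real.mul_rpow (by positivity) (by linarith : (0:ℝ) ≤ z - a), hcdef]; ring
      have := mul_le_mul_of_nonneg_left hcube (Real.rpow_nonneg hT.le ((1:ℝ)/3))
      nlinarith
  -- integrability of the shifted exponential
  have hg0_int : IntegrableOn (fun y : ℝ => Real.exp (- c * y ^ ((1:ℝ)/3))) (Set.Ici (0:ℝ)) := by
    rw [integrableOn_Ici_iff_integrableOn_Ioi]
    have base : IntegrableOn (fun x : ℝ => 3 * (x ^ (2:ℝ) * Real.exp (- c * x ^ (1:ℝ))))
        (Set.Ioi (0:ℝ)) :=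
      (integrableOn_rpow_mul_exp_neg_mul_rpow (by norm_num) (by norm_num) hc0).const_mul 3
    have h := (integrableOn_Ioi_comp_rpow_iff
      (fun y : ℝ => Real.exp (- c * y ^ ((1:ℝ)/3))) (p := 3) (by norm_num)).mp ?_
    · exact h
    · refine base.congr_fun ?_ measurableSet_Ioi
      intro x hx
      have hx0 : (0:ℝ) ≤ x := (le_of_lt hx)
      simp only [smul_eq_mul]
      rw [← Real.rpow_mul hx0, show (3:ℝ) * (1/3) = 1 by norm_num,
        show (3:ℝ) - 1 = 2 by norm_num, abs_of_nonneg (by norm_num : (0:ℝ) ≤ 3)]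
      ring
  have hindshift : ∀ z : ℝ, (Set.Ici a).indicator (fun z => Real.exp (- c * (z - a) ^ ((1:ℝ)/3))) z
      = (Set.Ici (0:ℝ)).indicator (fun y => Real.exp (- c * y ^ ((1:ℝ)/3))) (z - a) := by
    intro z
    simp [Set.indicator_apply, Set.mem_Ici, sub_nonneg]
  have hg0ind : Integrable ((Set.Ici (0:ℝ)).indicator (fun y => Real.exp (- c * y ^ ((1:ℝ)/3)))) :=
    (integrable_indicator_iff measurableSet_Ici).mpr hg0_int
  have htrans_int : IntegrableOn (fun z => Real.exp (- c * (z - a) ^ ((1:ℝ)/3))) (Set.Ici a) := by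
    have h1 : Integrable ((Set.Ici a).indicator fun z => Real.exp (- c * (z - a) ^ ((1:ℝ)/3)))
        volume := by
      rw [funext hindshift]
      exact hg0ind.comp_sub_right a
    exact (integrable_indicator_iff measurableSet_Ici).mp h1
  have htrans_val : ∫ z in Set.Ici a, Real.exp (- c * (z - a) ^ ((1:ℝ)/3))
      = ∫ y in Set.Ici (0:ℝ), Real.exp (- c * y ^ ((1:ℝ)/3)) := by
    rw [← integral_indicator measurableSet_Ici, funext hindshift,
      ← integral_indicator measurableSet_Ici]
    simp_rw [sub_eq_add_neg]
    exact integral_add_right_eq_self _ (-a)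
  have hval : ∫ y in Set.Ici (0:ℝ), Real.exp (- c * y ^ ((1:ℝ)/3)) = 4 / (π * T) := by
    rw [integral_Ici_eq_integral_Ioi,
      integral_exp_neg_mul_rpow (by norm_num : (0:ℝ) < 1/3) hc0,
      show (-1)/((1:ℝ)/3) = (-3:ℝ) by norm_num, show (1:ℝ)/(1/3) + 1 = ((3:ℕ):ℝ) + 1 by norm_num,
      Real.Gamma_nat_eq_factorial]
    have hcc : c ^ (-3:ℝ) = (T * (3*π/2))⁻¹ := by
      rw [hcdef, Real.mul_rpow (Real.rpow_nonneg hT.le _) (Real.rpow_nonneg (by positivity) _),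
        ← Real.rpow_mul hT.le, ← Real.rpow_mul (by positivity : (0:ℝ) ≤ 3*π/2),
        show (1:ℝ)/3 * (-3) = -1 by norm_num, Real.rpow_neg_one, Real.rpow_neg_one, ← mul_inv]
    rw [hcc]
    rw [show ((Nat.factorial 3 : ℕ) : ℝ) = 6 by norm_num [Nat.factorial]]
    rw [eq_div_iff (by positivity : π * T ≠ 0), inv_mul_eq_div, div_mul_eq_mul_div,
      div_eq_iff (by positivity : T * (3*π/2) ≠ 0)]
    ring
  -- indicator integral
  have hind_int : Integrable ((Set.Icc a b).indicator (fun _ => (1:ℝ))) := by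
    rw [integrable_indicator_iff measurableSet_Icc]
    exact integrableOn_const measure_Icc_lt_top.ne
  have hind_val : ∫ z in Set.Ici a, (Set.Icc a b).indicator (fun _ => (1:ℝ)) z
      = Real.sqrt (2/π) * s ^ ((3:ℝ)/4) := by
    rw [setIntegral_indicator measurableSet_Icc,
      Set.inter_eq_self_of_subset_right Set.Icc_subset_Ici_self, setIntegral_const,
      Real.volume_real_Icc, smul_eq_mul, mul_one, max_eq_left (by linarith : (0:ℝ) ≤ b - a)]
    rw [hbdef]; ring
  -- assemble
  calc (∫ z in Set.Ici a, Real.exp (T ^ ((1:ℝ)/3) * (s - (3 * π / 2 * z) ^ ((2:ℝ)/3))))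
      ≤ ∫ z in Set.Ici a, ((Set.Icc a b).indicator (fun _ => (1:ℝ)) z
          + Real.exp (- c * (z - a) ^ ((1:ℝ)/3))) := by
        refine integral_mono_of_nonneg (Filter.Eventually.of_forall fun z => (Real.exp_pos _).le)
          (hind_int.integrableOn.add htrans_int) ?_
        exact (ae_restrict_mem measurableSet_Ici).mono fun z hz => hkey z hz
    _ = (∫ z in Set.Ici a, (Set.Icc a b).indicator (fun _ => (1:ℝ)) z)
          + ∫ z in Set.Ici a, Real.exp (- c * (z - a) ^ ((1:ℝ)/3)) :=
        integral_add hind_int.integrableOn htrans_int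
    _ = Real.sqrt (2/π) * s ^ ((3:ℝ)/4) + 4 / (π * T) := by
        rw [hind_val, htrans_val, hval]
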